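/- Let m, h, k be natural numbers with k ≥ 1, let S be a finite set of natural numbers with |S| = k and x < 2^m for every x ∈ S, and suppose 2^m ≤ k · 2^h. Then the sum over j = 0, 1, ..., m of the number of distinct values of ⌊x / 2^j⌋ as x ranges over S is at most k·h + 2k. -/

import Mathlib

theorem stmt_13 (m h k : ℕ) (hk : 1 ≤ k) (S : Finset ℕ) (hS : S.card = k)
    (hbound : ∀ x ∈ S, x < 2 ^ m) (hmk : 2 ^ m ≤ k * 2 ^ h) :
    ∑ j ∈ Finset.range (m + 1), (S.image (fun x => x / 2 ^ j)).card ≤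
      k * h + 2 * k := by
  have key : ∀ j ∈ Finset.range (m + 1),
      (S.image (fun x => x / 2 ^ j)).card ≤ min k (2 ^ (m - j)) := by
    intro j hj
    rw [Finset.mem_range, Nat.lt_succ_iff] at hj
    refine le_min (hS ▸ Finset.card_image_le) ?_
    have hsub : S.image (fun x => x / 2 ^ j) ⊆ Finset.range (2 ^ (m - j)) := by
      intro y hy
      rw [Finset.mem_image] at hy
      obtain ⟨x, hx, rfl⟩ := hy
      rw [Finset.mem_range, Nat.div_lt_iff_lt_mul (by positivity : 0 < 2 ^ j),
        ← pow_add, Nat.sub_add_cancel hj]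
      exact hbound x hx
    simpa using Finset.card_le_card hsub
  have step1 : ∑ j ∈ Finset.range (m + 1), (S.image (fun x => x / 2 ^ j)).card ≤
      ∑ j ∈ Finset.range (m + 1), min k (2 ^ (m - j)) := Finset.sum_le_sum key
  have step2 : ∑ j ∈ Finset.range (m + 1), min k (2 ^ (m - j)) =
      ∑ i ∈ Finset.range (m + 1), min k (2 ^ i) := by
    have := Finset.sum_range_reflect (fun i => min k (2 ^ i)) (m + 1)
    simpa using this
  -- split into small and big exponents
  set P : ℕ → Prop := fun i => 2 ^ i ≤ k with hP
  have hsplit := Finset.sum_filter_add_sum_filter_not (Finset.range (m + 1)) P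
    (fun i => min k (2 ^ i))
  have hsmall : ∑ i ∈ (Finset.range (m + 1)).filter (fun x => P x), min k (2 ^ i) ≤ 2 * k := by
    have h1 : ∑ i ∈ (Finset.range (m + 1)).filter (fun x => P x), min k (2 ^ i) ≤
        ∑ i ∈ (Finset.range (m + 1)).filter (fun x => P x), 2 ^ i :=
      Finset.sum_le_sum fun i _ => min_le_right _ _
    have hsub : (Finset.range (m + 1)).filter (fun x => P x) ⊆ Finset.range (Nat.log 2 k + 1) := by
      intro i hi
      rw [Finset.mem_filter] at hi
      rw [Finset.mem_range, Nat.lt_succ_iff]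
      exact (Nat.le_log_iff_pow_le (by norm_num) (by omega)).mpr hi.2
    have h2 : ∑ i ∈ (Finset.range (m + 1)).filter (fun x => P x), 2 ^ i ≤
        ∑ i ∈ Finset.range (Nat.log 2 k + 1), 2 ^ i :=
      Finset.sum_le_sum_of_subset hsub
    have h3 : ∑ i ∈ Finset.range (Nat.log 2 k + 1), 2 ^ i = 2 ^ (Nat.log 2 k + 1) - 1 := by
      simpa using Nat.geomSum_eq (le_refl 2) (Nat.log 2 k + 1)
    have h4 : 2 ^ Nat.log 2 k ≤ k := Nat.pow_log_le_self 2 (by omega)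
    have : 2 ^ (Nat.log 2 k + 1) ≤ 2 * k := by
      rw [pow_succ]; omega
    omega
  have hbig : ∑ i ∈ (Finset.range (m + 1)).filter (fun x => ¬ P x), min k (2 ^ i) ≤
      k * h := by
    have hsub : (Finset.range (m + 1)).filter (fun x => ¬ P x) ⊆
        Finset.Ico (m + 1 - h) (m + 1) := by
      intro i hi
      rw [Finset.mem_filter, Finset.mem_range] at hi
      obtain ⟨hi1, hi2⟩ := hi
      simp only [hP, not_le] at hi2
      have : 2 ^ m < 2 ^ (i + h) := by
        calc 2 ^ m ≤ k * 2 ^ h := hmk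
        _ < 2 ^ i * 2 ^ h := by
            exact Nat.mul_lt_mul_of_lt_of_le hi2 (le_refl _) (by positivity : 0 < 2 ^ h)
        _ = 2 ^ (i + h) := by rw [pow_add]
      have hmih : m < i + h := by
        by_contra hc
        push_neg at hc
        have h5 : (2:ℕ) ^ (i + h) ≤ 2 ^ m := Nat.pow_le_pow_right (by norm_num) hc
        omega
      rw [Finset.mem_Ico]
      omega
    calc ∑ i ∈ (Finset.range (m + 1)).filter (fun x => ¬ P x), min k (2 ^ i)
        ≤ ∑ _i ∈ (Finset.range (m + 1)).filter (fun x => ¬ P x), k :=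
          Finset.sum_le_sum fun i _ => min_le_left _ _
      _ = ((Finset.range (m + 1)).filter (fun x => ¬ P x)).card * k := by
          rw [Finset.sum_const, smul_eq_mul]
      _ ≤ (Finset.Ico (m + 1 - h) (m + 1)).card * k :=
          Nat.mul_le_mul_right k (Finset.card_le_card hsub)
      _ ≤ h * k := by
          rw [Nat.card_Ico]
          exact Nat.mul_le_mul_right k (by omega)
      _ = k * h := Nat.mul_comm h k
  calc ∑ j ∈ Finset.range (m + 1), (S.image (fun x => x / 2 ^ j)).card
      ≤ ∑ i ∈ Finset.range (m + 1), min k (2 ^ i) := step2 ▸ step1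
    _ = _ + _ := hsplit.symm
    _ ≤ k * h + 2 * k := by omega
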